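/- The sequence d_0 = (1+√5)/4, d_1 = −1/2, d_2 = (1−√5)/4 is a normalized 2nd-order difference sequence: d_0 + d_1 + d_2 = 0 and d_0² + d_1² + d_2² = 1; moreover δ_1 = d_1 d_0 + d_2 d_1 = −1/4 and δ_2 = d_2 d_0 = −1/4, so that Δ_2 = Σ_{s=−2}^{2} δ_s² = 1 + 1/4, the minimal possible value of Δ_2 among normalized 2nd-order difference sequences. -/
import Mathlib


/-- `δ_s = ∑_{j=|s|}^m d_j d_{j-|s|}` for `|s| ≤ m`, and `δ_s = 0` for `|s| > m`. -/
noncomputable def delta (d : ℕ → ℝ) (m : ℕ) (s : ℤ) : ℝ :=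
  if s.natAbs ≤ m then ∑ j ∈ Finset.Icc s.natAbs m, d j * d (j - s.natAbs) else 0

lemma delta0 (e : ℕ → ℝ) : delta e 2 0 = e 0 * e 0 + e 1 * e 1 + e 2 * e 2 := by
  have h : Finset.Icc (0:ℕ) 2 = {0, 1, 2} := by decide
  simp [delta, h]
  ring

lemma delta1 (e : ℕ → ℝ) : delta e 2 1 = e 1 * e 0 + e 2 * e 1 := by
  have h : Finset.Icc (1:ℕ) 2 = {1, 2} := by decide
  simp [delta, h]

lemma delta1' (e : ℕ → ℝ) : delta e 2 (-1) = e 1 * e 0 + e 2 * e 1 := by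
  have h : Finset.Icc (1:ℕ) 2 = {1, 2} := by decide
  simp [delta, h]

lemma delta2 (e : ℕ → ℝ) : delta e 2 2 = e 2 * e 0 := by
  have h : Finset.Icc (2:ℕ) 2 = {2} := by decide
  simp [delta, h]

lemma delta2' (e : ℕ → ℝ) : delta e 2 (-2) = e 2 * e 0 := by
  have h : Finset.Icc (2:ℕ) 2 = {2} := by decide
  simp [delta, h]

lemma sum_delta (e : ℕ → ℝ) :
    ∑ s ∈ Finset.Icc (-2 : ℤ) 2, (delta e 2 s) ^ 2 =
      (e 0 * e 0 + e 1 * e 1 + e 2 * e 2) ^ 2 + 2 * (e 1 * e 0 + e 2 * e 1) ^ 2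
        + 2 * (e 2 * e 0) ^ 2 := by
  have h : Finset.Icc (-2 : ℤ) 2 = {-2, -1, 0, 1, 2} := by decide
  rw [h]
  simp [delta0, delta1, delta1', delta2, delta2']
  ring

/-- the sequence `d_0 = (1+√5)/4`, `d_1 = -1/2`, `d_2 = (1-√5)/4` is a
normalized 2nd-order difference sequence; `δ_1 = d_1 d_0 + d_2 d_1 = -1/4` and
`δ_2 = d_2 d_0 = -1/4`, so `Δ_2 = ∑_{s=-2}^{2} δ_s² = 1 + 1/4`, the minimal possible
value of `Δ_2` among normalized 2nd-order difference sequences. -/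
theorem stmt16 (d : ℕ → ℝ)
    (hd0 : d 0 = (1 + Real.sqrt 5) / 4)
    (hd1 : d 1 = -(1 / 2))
    (hd2 : d 2 = (1 - Real.sqrt 5) / 4) :
    d 0 + d 1 + d 2 = 0 ∧
    d 0 ^ 2 + d 1 ^ 2 + d 2 ^ 2 = 1 ∧
    delta d 2 1 = d 1 * d 0 + d 2 * d 1 ∧ delta d 2 1 = -(1 / 4) ∧
    delta d 2 2 = d 2 * d 0 ∧ delta d 2 2 = -(1 / 4) ∧
    (∑ s ∈ Finset.Icc (-2 : ℤ) 2, (delta d 2 s) ^ 2 = 1 + 1 / 4) ∧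
    (∀ e : ℕ → ℝ, ∑ j ∈ Finset.range 3, e j = 0 →
      ∑ j ∈ Finset.range 3, (e j) ^ 2 = 1 →
      1 + 1 / 4 ≤ ∑ s ∈ Finset.Icc (-2 : ℤ) 2, (delta e 2 s) ^ 2) := by
  have h5 : Real.sqrt 5 ^ 2 = 5 := Real.sq_sqrt (by norm_num)
  refine ⟨by rw [hd0, hd1, hd2]; ring, by rw [hd0, hd1, hd2]; nlinarith [h5],
    delta1 d, ?_, delta2 d, ?_, ?_, ?_⟩
  · rw [delta1, hd0, hd1, hd2]; ring
  · rw [delta2, hd0, hd2]; nlinarith [h5]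
  · rw [sum_delta, hd0, hd1, hd2]; nlinarith [h5]
  · intro e h1 h2
    simp [Finset.sum_range_succ] at h1 h2
    rw [sum_delta]
    nlinarith [sq_nonneg (e 1 * e 0 + e 2 * e 1 - e 2 * e 0), sq_nonneg (e 0 + e 1 + e 2)]
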